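/- arXiv:2504.05440 — 3 statements merged into one kernel-verified Lean document; each statement's English description precedes it below -/
import Mathlib

section
/- With the notation of the combinatorial function δ attached to a tuple (k_1,…,k_e) of nonnegative integers summing to r (with f nonzero entries): r − e·δ(r) = 0 if and only if f = e and all nonzero k_i are equal to r/e (i.e., the Young diagram is a rectangle with e rows). -/
/-- `mu e k j` = number of parts `k_i`, `1 ≤ i ≤ e`, of size at least `j`
(column lengths of the Young diagram). -/
def mu (e : ℕ) (k : ℕ → ℕ) (j : ℕ) : ℕ :=
  ((Finset.Icc 1 e).filter (fun i => j ≤ k i)).card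

/-- `delta e k i = j` iff `∑_{m<j} μ(m) < i ≤ ∑_{m≤j} μ(m)`. -/
noncomputable def delta (e : ℕ) (k : ℕ → ℕ) (i : ℕ) : ℕ :=
  sInf {j : ℕ | i ≤ ∑ m ∈ Finset.Icc 1 j, mu e k m}

/-- `f` = number of nonzero parts. -/
def nzCount (e : ℕ) (k : ℕ → ℕ) : ℕ :=
  ((Finset.Icc 1 e).filter (fun i => k i ≠ 0)).card

lemma sum_mu (e j : ℕ) (k : ℕ → ℕ) :
    ∑ m ∈ Finset.Icc 1 j, mu e k m = ∑ i ∈ Finset.Icc 1 e, min (k i) j := by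
  unfold mu
  simp_rw [Finset.card_filter]
  rw [Finset.sum_comm]
  refine Finset.sum_congr rfl fun i _ => ?_
  rw [← Finset.card_filter]
  have h : (Finset.Icc 1 j).filter (fun m => m ≤ k i) = Finset.Icc 1 (min (k i) j) := by
    ext m; simp only [Finset.mem_filter, Finset.mem_Icc]; omega
  rw [h, Nat.card_Icc]; omega

lemma mem_iff (e r j : ℕ) (k : ℕ → ℕ) (hsum : ∑ i ∈ Finset.Icc 1 e, k i = r) :
    r ≤ ∑ m ∈ Finset.Icc 1 j, mu e k m ↔ ∀ i ∈ Finset.Icc 1 e, k i ≤ j := by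
  rw [sum_mu]
  constructor
  · intro h
    by_contra hc
    push_neg at hc
    obtain ⟨i₀, hi₀, hlt⟩ := hc
    have : ∑ i ∈ Finset.Icc 1 e, min (k i) j < ∑ i ∈ Finset.Icc 1 e, k i := by
      refine Finset.sum_lt_sum (fun i _ => min_le_left _ _) ⟨i₀, hi₀, ?_⟩
      omega
    omega
  · intro h
    have : ∑ i ∈ Finset.Icc 1 e, min (k i) j = ∑ i ∈ Finset.Icc 1 e, k i :=
      Finset.sum_congr rfl fun i hi => min_eq_left (h i hi)
    omega

theorem stmt7 (e r : ℕ) (he : 1 ≤ e) (hr : 1 ≤ r) (k : ℕ → ℕ)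
    (hsum : ∑ i ∈ Finset.Icc 1 e, k i = r) :
    (r : ℤ) - (e : ℤ) * (delta e k r : ℤ) = 0 ↔
      (nzCount e k = e ∧ e ∣ r ∧ ∀ i ∈ Finset.Icc 1 e, k i = r / e) := by
  have hset : {j : ℕ | r ≤ ∑ m ∈ Finset.Icc 1 j, mu e k m}
      = {j : ℕ | ∀ i ∈ Finset.Icc 1 e, k i ≤ j} := by
    ext j; exact mem_iff e r j k hsum
  have hne : r ∈ {j : ℕ | ∀ i ∈ Finset.Icc 1 e, k i ≤ j} := by
    intro i hi
    calc k i ≤ ∑ i ∈ Finset.Icc 1 e, k i := Finset.single_le_sum (fun _ _ => Nat.zero_le _) hi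
    _ = r := hsum
  have hmem : delta e k r ∈ {j : ℕ | ∀ i ∈ Finset.Icc 1 e, k i ≤ j} := by
    rw [delta, hset]
    exact Nat.sInf_mem ⟨r, hne⟩
  constructor
  · intro h
    have hM : r = e * delta e k r := by exact_mod_cast (by linarith : (r:ℤ) = e * delta e k r)
    set M := delta e k r with hMdef
    have hall : ∀ i ∈ Finset.Icc 1 e, k i = M := by
      by_contra hc
      push_neg at hc
      obtain ⟨i₀, hi₀, hne'⟩ := hc
      have : ∑ i ∈ Finset.Icc 1 e, k i < ∑ _i ∈ Finset.Icc 1 e, M := by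
        refine Finset.sum_lt_sum (fun i hi => hmem i hi) ⟨i₀, hi₀, lt_of_le_of_ne (hmem i₀ hi₀) hne'⟩
      rw [hsum, Finset.sum_const, Nat.card_Icc, smul_eq_mul, Nat.add_sub_cancel] at this
      omega
    have hMpos : 1 ≤ M := by
      rcases Nat.eq_zero_or_pos M with h0 | h1
      · rw [h0, Nat.mul_zero] at hM; omega
      · exact h1
    have hdiv : e ∣ r := ⟨M, hM⟩
    have hMr : M = r / e := by rw [hM]; rw [Nat.mul_div_cancel_left _ (by omega : 0 < e)]
    refine ⟨?_, hdiv, fun i hi => by rw [hall i hi, hMr]⟩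
    unfold nzCount
    rw [Finset.filter_true_of_mem fun i hi => by rw [hall i hi]; omega]
    rw [Nat.card_Icc]; omega
  · rintro ⟨hf, hdiv, hall⟩
    have hd : delta e k r = r / e := by
      rw [delta, hset]
      apply le_antisymm
      · exact Nat.sInf_le fun i hi => le_of_eq (hall i hi)
      · have := Nat.sInf_mem (⟨r, hne⟩ : {j : ℕ | ∀ i ∈ Finset.Icc 1 e, k i ≤ j}.Nonempty)
        have h1 : (1:ℕ) ∈ Finset.Icc 1 e := by simp [he]
        have := this 1 h1
        rw [hall 1 h1] at this
        exact this
    rw [hd]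
    have h1 : e * (r / e) = r := Nat.mul_div_cancel' hdiv
    have h2 : (e:ℤ) * ((r / e : ℕ):ℤ) = (r:ℤ) := by exact_mod_cast h1
    linarith
end

section
/- With the notation of the combinatorial function δ attached to a tuple (k_1,…,k_e) of nonnegative integers summing to r: if r − e·δ(r) = −1, then either (a) the tuple has f = e − 1 = r nonzero entries all equal to 1 (a single column of length e−1), or (b) f = e and the diagram is a rectangle with e rows and one missing cell, i.e., all nonzero k_i equal (r+1)/e except one which equals (r+1)/e − 1. -/
lemma mu_sum (e : ℕ) (k : ℕ → ℕ) (j : ℕ) :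
    ∑ m ∈ Finset.Icc 1 j, mu e k m = ∑ i ∈ Finset.Icc 1 e, min (k i) j := by
  simp only [mu, Finset.card_filter]
  rw [Finset.sum_comm]
  refine Finset.sum_congr rfl fun i _ => ?_
  rw [← Finset.card_filter]
  have : (Finset.Icc 1 j).filter (fun m => m ≤ k i) = Finset.Icc 1 (min (k i) j) := by
    ext m; simp only [Finset.mem_filter, Finset.mem_Icc]; omega
  rw [this, Nat.card_Icc]; omega

theorem stmt8 (e r : ℕ) (he : 1 ≤ e) (hr : 1 ≤ r) (k : ℕ → ℕ)
    (hsum : ∑ i ∈ Finset.Icc 1 e, k i = r)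
    (h : (r : ℤ) - (e : ℤ) * (delta e k r : ℤ) = -1) :
    (nzCount e k = e - 1 ∧ e - 1 = r ∧ ∀ i ∈ Finset.Icc 1 e, k i ≤ 1) ∨
      (nzCount e k = e ∧ e ∣ (r + 1) ∧
        ∃ i0 ∈ Finset.Icc 1 e, k i0 = (r + 1) / e - 1 ∧
          ∀ i ∈ Finset.Icc 1 e, i ≠ i0 → k i = (r + 1) / e) := by
  set d := delta e k r with hd
  have hed : e * d = r + 1 := by
    have : (e : ℤ) * d = r + 1 := by linarith
    exact_mod_cast this
  -- the set defining delta is nonempty (r belongs)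
  have hmem : r ∈ {j : ℕ | r ≤ ∑ m ∈ Finset.Icc 1 j, mu e k m} := by
    rw [Set.mem_setOf_eq, mu_sum]
    have : ∑ i ∈ Finset.Icc 1 e, min (k i) r = ∑ i ∈ Finset.Icc 1 e, k i := by
      refine Finset.sum_congr rfl fun i hi => ?_
      have : k i ≤ r := hsum ▸ Finset.single_le_sum (fun _ _ => Nat.zero_le _) hi
      omega
    omega
  have hdin : r ≤ ∑ m ∈ Finset.Icc 1 d, mu e k m := Nat.sInf_mem ⟨r, hmem⟩
  rw [mu_sum] at hdin
  -- each k i ≤ d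
  have hle : ∀ i ∈ Finset.Icc 1 e, k i ≤ d := by
    intro i hi
    by_contra hc
    push_neg at hc
    have hlt : ∑ i ∈ Finset.Icc 1 e, min (k i) d < ∑ i ∈ Finset.Icc 1 e, k i := by
      refine Finset.sum_lt_sum (fun j _ => min_le_left _ _) ⟨i, hi, ?_⟩
      omega
    omega
  -- sum of defects is 1
  have hdef : ∑ i ∈ Finset.Icc 1 e, (d - k i) = 1 := by
    rw [Finset.sum_tsub_distrib _ hle, hsum, Finset.sum_const, smul_eq_mul, Nat.card_Icc,
      Nat.add_sub_cancel, hed]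
    omega
  -- find the unique defective index
  obtain ⟨i0, hi0, hpos⟩ : ∃ i ∈ Finset.Icc 1 e, 0 < d - k i := by
    by_contra hc
    push_neg at hc
    have : ∑ i ∈ Finset.Icc 1 e, (d - k i) = 0 :=
      Finset.sum_eq_zero fun i hi => by have := hc i hi; omega
    omega
  have hsplit : (d - k i0) + ∑ i ∈ (Finset.Icc 1 e).erase i0, (d - k i)
      = ∑ i ∈ Finset.Icc 1 e, (d - k i) := Finset.add_sum_erase _ (fun i => d - k i) hi0
  have hrest0 : ∑ i ∈ (Finset.Icc 1 e).erase i0, (d - k i) = 0 := by omega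
  have hki0 : k i0 = d - 1 := by
    have : d - k i0 = 1 := by omega
    have := hle i0 hi0
    omega
  have hothers : ∀ i ∈ Finset.Icc 1 e, i ≠ i0 → k i = d := by
    intro i hi hne
    have hmem' : i ∈ (Finset.Icc 1 e).erase i0 := Finset.mem_erase.2 ⟨hne, hi⟩
    have := Finset.sum_eq_zero_iff.1 hrest0 i hmem'
    have := hle i hi
    omega
  have hd1 : 1 ≤ d := by nlinarith
  rcases eq_or_lt_of_le hd1 with hd2 | hd2
  · -- d = 1 : case (a)
    left
    have hd' : d = 1 := hd2.symm
    have hk0 : k i0 = 0 := by omega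
    have hfilter : (Finset.Icc 1 e).filter (fun i => k i ≠ 0) = (Finset.Icc 1 e).erase i0 := by
      ext i
      simp only [Finset.mem_filter, Finset.mem_erase]
      constructor
      · rintro ⟨hi, hne⟩
        exact ⟨fun hh => hne (hh ▸ hk0), hi⟩
      · rintro ⟨hne, hi⟩
        have := hothers i hi hne
        refine ⟨hi, ?_⟩; omega
    refine ⟨?_, by rw [hd', mul_one] at hed; omega, fun i hi => by have := hle i hi; omega⟩
    rw [nzCount, hfilter, Finset.card_erase_of_mem hi0, Nat.card_Icc]
    omega
  · -- d ≥ 2 : case (b)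
    right
    have hdvd : e ∣ (r + 1) := ⟨d, hed.symm⟩
    have hquot : (r + 1) / e = d := by
      rw [← hed, Nat.mul_div_cancel_left _ (by omega)]
    have hnz : ∀ i ∈ Finset.Icc 1 e, k i ≠ 0 := by
      intro i hi
      rcases eq_or_ne i i0 with rfl | hne
      · omega
      · have := hothers i hi hne; omega
    refine ⟨?_, hdvd, i0, hi0, by rw [hquot]; omega, fun i hi hne => by rw [hquot]; exact hothers i hi hne⟩
    rw [nzCount, Finset.filter_true_of_mem hnz, Nat.card_Icc]
    omega
end

section
/- Let (k_1,…,k_e) be nonnegative integers with sum r, defining the function δ and divisor coefficients as in the invariant Hitchin base. Let φ(t) ∈ M_r(ℂ[[t]]) satisfy the block valuation bounds: the (i,j)-block entries have valuation ≥ (l_j − l_i − 1 mod e). Then for every i ∈ {1,…,r}, the order of vanishing of Tr(∧^i φ) at t = 0 is at least e·δ(i) − i. -/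
open Finset Polynomial

lemma myOrderNegLe (f : PowerSeries ℂ) : f.order ≤ (-f).order :=
  PowerSeries.le_order _ _ (fun i hi => by
    rw [map_neg, PowerSeries.coeff_of_lt_order i hi, neg_zero])

lemma myCastLe (n : ℕ) (m : ℕ∞) : ((n : ℕ∞) ≤ m) ↔ ((n : ℕ∞) ≤ m) := Iff.rfl

lemma myOrderSumGe {ι : Type*} (s : Finset ι) (f : ι → PowerSeries ℂ) (n : ℕ∞)
    (h : ∀ x ∈ s, n ≤ (f x).order) : n ≤ (∑ x ∈ s, f x).order := by
  classical
  induction s using Finset.induction with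
  | empty => simp
  | insert _ _ hx ih =>
    rename_i a s
    rw [Finset.sum_insert hx]
    refine le_trans (le_min (h _ (mem_insert_self _ _))
      (ih fun x hxs => h x (mem_insert_of_mem hxs)))
      (PowerSeries.min_order_le_order_add _ _)

lemma myOrderProdGe {ι : Type*} (s : Finset ι) (f : ι → PowerSeries ℂ) (g : ι → ℕ)
    (h : ∀ x ∈ s, (g x : ℕ∞) ≤ (f x).order) :
    ((∑ x ∈ s, g x : ℕ) : ℕ∞) ≤ (∏ x ∈ s, f x).order := by
  classical
  induction s using Finset.induction with
  | empty => simp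
  | insert _ _ hx ih =>
    rw [Finset.sum_insert hx, Finset.prod_insert hx, Nat.cast_add]
    exact le_trans (add_le_add (h _ (mem_insert_self _ _))
      (ih fun x hxs => h x (mem_insert_of_mem hxs))) (PowerSeries.le_order_mul _ _)

lemma existsDescent {r : ℕ} (L : Fin r → ℕ) (hL1 : ∀ a, 1 ≤ L a)
    (σ : Equiv.Perm (Fin r)) (a : Fin r) :
    ∃ t : ℕ, L ((⇑σ)^[t] a) ≤ L ((⇑σ)^[t + 1] a) := by
  by_contra h
  push_neg at h
  have key : ∀ t, L ((⇑σ)^[t] a) + t ≤ L a := by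
    intro t
    induction t with
    | zero => simp
    | succ n ih =>
      have := h n
      omega
  have h1 := key (L a)
  have h2 := hL1 ((⇑σ)^[L a] a)
  omega

/-- The main combinatorial lemma: for a `σ`-invariant set `S` of size `i`,
the sum of the valuation bounds is at least `e * delta e k i - i`. -/
lemma combLemma (r e : ℕ) (he : 1 ≤ e) (L : Fin r → ℕ)
    (hL : ∀ a, 1 ≤ L a ∧ L a ≤ e)
    (k : ℕ → ℕ) (hk : ∀ l : ℕ, k l = (Finset.univ.filter fun a => L a = l).card)
    (σ : Equiv.Perm (Fin r)) (S : Finset (Fin r)) (hS : ∀ a ∈ S, σ a ∈ S) (i : ℕ)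
    (hcard : S.card = i) :
    e * delta e k i ≤ i + ∑ a ∈ S, (L a + 2 * e - L (σ a) - 1) % e := by
  classical
  set W := ∑ a ∈ S, (L a + 2 * e - L (σ a) - 1) % e with hW
  set D := (S.filter fun a => L a ≤ L (σ a)).card with hD
  set D' := (S.filter fun a => ¬ L a ≤ L (σ a)).card with hD'
  -- the pointwise identity for each term
  have hterm : ∀ a : Fin r, (L a + 2 * e - L (σ a) - 1) % e + 1 + L (σ a) +
      (if L a ≤ L (σ a) then 0 else e) = L a + e := by
    intro a
    obtain ⟨h1, h2⟩ := hL a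
    obtain ⟨h3, h4⟩ := hL (σ a)
    have he1 : (L a + 2 * e - L (σ a) - 1) = (L a + e - L (σ a) - 1) + e := by omega
    rw [he1, Nat.add_mod_right]
    by_cases hc : L a ≤ L (σ a)
    · rw [Nat.mod_eq_of_lt (by omega)]
      simp only [if_pos hc]
      omega
    · have he2 : L a + e - L (σ a) - 1 = (L a - L (σ a) - 1) + e := by omega
      rw [he2, Nat.add_mod_right, Nat.mod_eq_of_lt (by omega)]
      simp only [if_neg hc]
      omega
  -- σ restricted to S is a bijection of S
  have himg : S.image σ = S := by
    apply Finset.eq_of_subset_of_card_le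
    · intro b hb
      rw [Finset.mem_image] at hb
      obtain ⟨a, ha, rfl⟩ := hb
      exact hS a ha
    · rw [Finset.card_image_of_injective _ σ.injective]
  have hsumL : ∑ a ∈ S, L (σ a) = ∑ b ∈ S, L b := by
    conv_rhs => rw [← himg]
    rw [Finset.sum_image (fun a _ b _ h => σ.injective h)]
  -- the key identity  W + i = e * D
  have hDD' : D + D' = i := by
    rw [hD, hD', Finset.card_filter_add_card_filter_not, hcard]
  have hkey : W + i = D * e := by
    have h1 : ∑ a ∈ S, ((L a + 2 * e - L (σ a) - 1) % e + 1 + L (σ a) +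
        (if L a ≤ L (σ a) then 0 else e)) = ∑ a ∈ S, (L a + e) :=
      Finset.sum_congr rfl fun a _ => hterm a
    rw [Finset.sum_add_distrib, Finset.sum_add_distrib, Finset.sum_add_distrib,
      Finset.sum_add_distrib] at h1
    rw [Finset.sum_ite, Finset.sum_const_zero, zero_add, Finset.sum_const, smul_eq_mul,
      Finset.sum_const, Finset.sum_const, smul_eq_mul, smul_eq_mul, mul_one, hcard,
      hsumL] at h1
    have hcongr : (Finset.filter (fun x => ¬ L x ≤ L (σ x)) S).card = D' := by
      rw [hD']
    rw [hcongr] at h1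
    have hmul : i * e = D * e + D' * e := by rw [← add_mul, hDD']
    rw [hW]
    omega
  -- the fiber counts
  have hnl : ∀ l : ℕ, (S.filter fun a => L a = l).card ≤ D := by
    intro l
    have hex : ∀ a : Fin r, ∃ t : ℕ, L ((⇑σ)^[t] a) ≤ L ((⇑σ)^[t + 1] a) :=
      existsDescent L (fun a => (hL a).1) σ
    set tf : Fin r → ℕ := fun a => Nat.find (hex a) with htf
    set g : Fin r → Fin r := fun a => (⇑σ)^[tf a] a with hg
    have hiter : ∀ a ∈ S, ∀ n : ℕ, (⇑σ)^[n] a ∈ S := by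
      intro a ha n
      induction n with
      | zero => simpa using ha
      | succ n ih =>
        rw [Function.iterate_succ_apply']
        exact hS _ ih
    -- strict decrease before the first descent
    have hdec : ∀ a : Fin r, ∀ s : ℕ, 0 < s → s ≤ tf a → L ((⇑σ)^[s] a) < L a := by
      intro a s hs hle
      induction s with
      | zero => omega
      | succ n ih =>
        have hmin : L ((⇑σ)^[n + 1] a) < L ((⇑σ)^[n] a) := by
          have h := Nat.find_min (hex a) (show n < tf a by omega)
          omega
        rcases Nat.eq_zero_or_pos n with h0 | hpos
        · subst h0
          simpa using hmin
        · exact lt_trans hmin (ih hpos (by omega))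
    have hkey2 : ∀ a ∈ S.filter (fun a => L a = l), ∀ a' ∈ S.filter (fun a => L a = l),
        tf a ≤ tf a' → g a = g a' → a = a' := by
      intro a ha a' ha' hle hgg
      have h1 : (⇑σ)^[tf a] a = (⇑σ)^[tf a] ((⇑σ)^[tf a' - tf a] a') := by
        rw [← Function.iterate_add_apply,
          show tf a + (tf a' - tf a) = tf a' from by omega]
        exact hgg
      have h2 : a = (⇑σ)^[tf a' - tf a] a' := (σ.injective.iterate (tf a)) h1
      rcases Nat.eq_zero_or_pos (tf a' - tf a) with h0 | hpos
      · rw [h0] at h2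
        simpa using h2
      · exfalso
        have h3 := hdec a' _ hpos (by omega)
        rw [← h2] at h3
        rw [Finset.mem_filter] at ha ha'
        omega
    apply Finset.card_le_card_of_injOn g
    · intro a ha
      rw [Finset.mem_coe, Finset.mem_filter] at ha
      rw [Finset.mem_coe, Finset.mem_filter]
      refine ⟨hiter a ha.1 _, ?_⟩
      have hspec := Nat.find_spec (hex a)
      rw [Function.iterate_succ_apply'] at hspec
      exact hspec
    · intro a ha b hb hgg
      rw [Finset.mem_coe] at ha hb
      rcases le_total (tf a) (tf b) with h | h
      · exact hkey2 a ha b hb h hgg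
      · exact (hkey2 b hb a ha h hgg.symm).symm
  have hkl : ∀ l : ℕ, (S.filter fun a => L a = l).card ≤ k l := by
    intro l
    rw [hk]
    apply Finset.card_le_card
    intro a ha
    rw [Finset.mem_filter] at ha ⊢
    exact ⟨Finset.mem_univ a, ha.2⟩
  -- i ≤ ∑_{m ∈ Icc 1 D} mu e k m
  have hfib : i = ∑ l ∈ Finset.Icc 1 e, (S.filter fun a => L a = l).card := by
    rw [← hcard]
    apply Finset.card_eq_sum_card_fiberwise
    intro a _
    rw [Finset.mem_coe, Finset.mem_Icc]
    exact hL a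
  have hminsum : ∑ l ∈ Finset.Icc 1 e, min (k l) D = ∑ m ∈ Finset.Icc 1 D, mu e k m := by
    have h1 : ∀ l : ℕ, min (k l) D = ((Finset.Icc 1 D).filter (fun m => m ≤ k l)).card := by
      intro l
      rw [show (Finset.Icc 1 D).filter (fun m => m ≤ k l) = Finset.Icc 1 (min (k l) D) from by
        ext m
        simp only [Finset.mem_filter, Finset.mem_Icc, le_min_iff]
        omega]
      rw [Nat.card_Icc]
      omega
    simp only [h1, mu, Finset.card_filter]
    rw [Finset.sum_comm]
  have hiD : i ≤ ∑ m ∈ Finset.Icc 1 D, mu e k m := by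
    rw [← hminsum, hfib]
    apply Finset.sum_le_sum
    intro l _
    exact le_min (hkl l) (hnl l)
  have hdeltaD : delta e k i ≤ D := Nat.sInf_le (show D ∈ {j : ℕ | i ≤ ∑ m ∈ Finset.Icc 1 j, mu e k m} from hiD)
  have h5 := Nat.mul_le_mul_left e hdeltaD
  have h6 : e * D = D * e := mul_comm e D
  omega

theorem stmt13 (r e : ℕ) (hr : 1 ≤ r) (he : 1 ≤ e)
    (L : Fin r → ℕ) (hL : ∀ a, 1 ≤ L a ∧ L a ≤ e)
    (k : ℕ → ℕ) (hk : ∀ l : ℕ, k l = (Finset.univ.filter fun a => L a = l).card)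
    (M : Matrix (Fin r) (Fin r) (PowerSeries ℂ))
    (hval : ∀ a b : Fin r,
      (((L b + 2 * e - L a - 1) % e : ℕ) : ℕ∞) ≤ (M a b).order) :
    ∀ i ∈ Finset.Icc 1 r,
      ((e * delta e k i - i : ℕ) : ℕ∞) ≤ (M.charpoly.coeff (r - i)).order := by
  classical
  intro i hi
  rw [Finset.mem_Icc] at hi
  have hch : M.charpoly.coeff (r - i) = ∑ σ : Equiv.Perm (Fin r),
      Equiv.Perm.sign σ • (∏ a, M.charmatrix (σ a) a).coeff (r - i) := by
    have h0 : M.charpoly = M.charmatrix.det := rfl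
    rw [h0, Matrix.det_apply, Polynomial.finset_sum_coeff]
    exact Finset.sum_congr rfl fun σ _ => Polynomial.coeff_smul _ _ _
  rw [hch]
  rw [myCastLe]
  apply myOrderSumGe
  intro σ _
  -- handle the sign
  have hmain : ((e * delta e k i - i : ℕ) : ℕ∞) ≤
      ((∏ a, M.charmatrix (σ a) a).coeff (r - i)).order := by
    set F := Finset.univ.filter (fun a : Fin r => σ a = a) with hF
    set G := Finset.univ.filter (fun a : Fin r => ¬ σ a = a) with hG
    have hFG : F.card + G.card = r := by
      rw [hF, hG, Finset.card_filter_add_card_filter_not, Finset.card_univ,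
        Fintype.card_fin]
    have hsplit : ∏ a, M.charmatrix (σ a) a =
        (∏ a ∈ F, (X + C (-(M a a)))) * C (∏ a ∈ G, -(M (σ a) a)) := by
      rw [← Finset.prod_filter_mul_prod_filter_not Finset.univ (fun a => σ a = a)]
      congr 1
      · apply Finset.prod_congr rfl
        intro a ha
        rw [Finset.mem_filter] at ha
        rw [ha.2, Matrix.charmatrix_apply_eq, sub_eq_add_neg, ← map_neg]
      · rw [map_prod]
        apply Finset.prod_congr rfl
        intro a ha
        rw [Finset.mem_filter] at ha
        rw [Matrix.charmatrix_apply_ne _ _ _ ha.2, map_neg]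
    rw [hsplit, Polynomial.coeff_mul_C]
    by_cases hd : r - i ≤ F.card
    · rw [Finset.prod_X_add_C_coeff _ _ hd, Finset.sum_mul]
      apply myOrderSumGe
      intro t ht
      rw [Finset.mem_powersetCard] at ht
      obtain ⟨htF, htc⟩ := ht
      have hdisj : Disjoint t G := by
        apply Finset.disjoint_left.mpr
        intro a hat haG
        have h1 := htF hat
        rw [hF, Finset.mem_filter] at h1
        rw [hG, Finset.mem_filter] at haG
        exact haG.2 h1.2
      have hprod : (∏ a ∈ t, -(M a a)) * (∏ a ∈ G, -(M (σ a) a)) =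
          ∏ a ∈ t ∪ G, -(M (σ a) a) := by
        rw [Finset.prod_union hdisj]
        congr 1
        apply Finset.prod_congr rfl
        intro a hat
        have h1 := htF hat
        rw [hF, Finset.mem_filter] at h1
        rw [h1.2]
      rw [hprod]
      have hScard : (t ∪ G).card = i := by
        rw [Finset.card_union_of_disjoint hdisj]
        omega
      have hSinv : ∀ a ∈ t ∪ G, σ a ∈ t ∪ G := by
        intro a ha
        rw [Finset.mem_union] at ha ⊢
        rcases ha with hat | haG
        · left
          have h1 := htF hat
          rw [hF, Finset.mem_filter] at h1
          rw [h1.2]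
          exact hat
        · right
          rw [hG, Finset.mem_filter] at haG ⊢
          refine ⟨Finset.mem_univ _, ?_⟩
          intro h
          exact haG.2 (σ.injective h)
      refine le_trans ?_ (myOrderProdGe (t ∪ G) _
        (fun a => (L a + 2 * e - L (σ a) - 1) % e) ?_)
      · rw [Nat.cast_le]
        have := combLemma r e he L hL k hk σ (t ∪ G) hSinv i hScard
        omega
      · intro a _
        exact le_trans ((myCastLe _ _).mp (hval (σ a) a)) (myOrderNegLe _)
    · have hz : (∏ a ∈ F, (X + C (-(M a a)))).coeff (r - i) = 0 := by
        apply Polynomial.coeff_eq_zero_of_natDegree_lt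
        calc (∏ a ∈ F, (X + C (-(M a a)))).natDegree
            ≤ ∑ a ∈ F, (X + C (-(M a a))).natDegree := Polynomial.natDegree_prod_le _ _
          _ = F.card := by
              rw [Finset.sum_congr rfl fun a _ => Polynomial.natDegree_X_add_C (-(M a a)),
                Finset.sum_const, smul_eq_mul, mul_one]
          _ < r - i := by omega
      rw [hz, zero_mul, PowerSeries.order_zero]
      exact le_top
  rcases Int.units_eq_one_or (Equiv.Perm.sign σ) with h | h
  · rw [h, one_smul]
    exact hmain
  · rw [h, Units.smul_def, Units.val_neg, Units.val_one, neg_one_zsmul]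
    exact le_trans hmain (myOrderNegLe _)
end
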